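/- Fix m ∈ ℕ. Let x ∈ D[0,1] and ν ∈ [0,1]^m be such that x is continuous at each coordinate ν_1, …, ν_m. If (x_n) is a sequence in D[0,1] converging to x in the Skorohod topology (i.e. there exist λ_n ∈ Λ with sup_t |λ_n(t) − t| → 0 and sup_t |x_n(t) − x(λ_n(t))| → 0) and ν^{(n)} ∈ [0,1]^m converges to ν componentwise, then the projections converge: (x_n(ν^{(n)}_1), …, x_n(ν^{(n)}_m)) → (x(ν_1), …, x(ν_m)) in ℝ^m. In particular the projection operator Π(x, ν) = (x(ν_1), …, x(ν_m)) is continuous at (x, ν). -/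

import Mathlib

open Set Filter

/-- A function `x : ℝ → ℝ` is RCLL (càdlàg) on `[0,1]`. -/
def RCLL (x : ℝ → ℝ) : Prop :=
  (∀ t ∈ Set.Ico (0:ℝ) 1,
      Filter.Tendsto x (nhdsWithin t (Set.Ioc t 1)) (nhds (x t))) ∧
  (∀ t ∈ Set.Ioc (0:ℝ) 1,
      ∃ L : ℝ, Filter.Tendsto x (nhdsWithin t (Set.Ico 0 t)) (nhds L))

/-- The uniform "norm" of a function over `[0,1]`. -/
noncomputable def unifNorm (f : ℝ → ℝ) : ℝ :=
  sSup ((fun t => |f t|) '' Set.Icc 0 1)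

/-- Membership in `Λ`: a continuous, strictly increasing bijection of `[0,1]`
onto itself fixing the endpoints. -/
def MemLambda (l : ℝ → ℝ) : Prop :=
  ContinuousOn l (Set.Icc 0 1) ∧ StrictMonoOn l (Set.Icc 0 1) ∧
    Set.BijOn l (Set.Icc 0 1) (Set.Icc 0 1) ∧ l 0 = 0 ∧ l 1 = 1

/-- Skorohod convergence of a sequence `x_n → x` in `D[0,1]`: there exist
`λ_n ∈ Λ` with `sup_t |λ_n(t) − t| → 0` and `sup_t |x_n(t) − x(λ_n(t))| → 0`. -/
def SkorohodTendsto (xn : ℕ → ℝ → ℝ) (x : ℝ → ℝ) : Prop :=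
  ∃ l : ℕ → ℝ → ℝ, (∀ n, MemLambda (l n)) ∧
    Filter.Tendsto (fun n => unifNorm (fun t => l n t - t)) Filter.atTop (nhds 0) ∧
    Filter.Tendsto (fun n => unifNorm (fun t => xn n t - x (l n t))) Filter.atTop (nhds 0)

/-- The projection operator `Π(x, ν) = (x(ν_1), …, x(ν_m))`. -/
def proj (m : ℕ) (x : ℝ → ℝ) (ν : Fin m → ℝ) : Fin m → ℝ := fun i => x (ν i)


private lemma eventually_abs_bdd_of_tendsto {f : ℝ → ℝ} {F : Filter ℝ} {c : ℝ}
    (h : Filter.Tendsto f F (nhds c)) : ∃ M, ∀ᶠ s in F, |f s| ≤ M :=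
  ⟨|c| + 1, Filter.Tendsto.eventually_le_const (lt_add_one |c|) h.abs⟩

private lemma rcll_bdd {x : ℝ → ℝ} (hx : RCLL x) :
    ∃ M, ∀ t ∈ Set.Icc (0:ℝ) 1, |x t| ≤ M := by
  have key : BddAbove ((fun t => |x t|) '' Set.Icc (0:ℝ) 1) := by
    refine IsCompact.induction_on (isCompact_Icc)
      (by simp) (fun s t hst ht => ht.mono (Set.image_mono hst))
      (fun s t hs ht => by rw [Set.image_union]; exact hs.union ht) ?_
    intro t ht
    -- right part
    have hR : ∃ M, ∀ᶠ s in nhdsWithin t (Set.Ioc t 1), |x s| ≤ M := by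
      rcases eq_or_lt_of_le ht.2 with h1 | h1
      · refine ⟨0, ?_⟩
        have : Set.Ioc t (1:ℝ) = ∅ := by rw [h1]; simp
        rw [this, nhdsWithin_empty]
        exact Filter.eventually_bot
      · exact eventually_abs_bdd_of_tendsto (hx.1 t ⟨ht.1, h1⟩)
    have hL : ∃ M, ∀ᶠ s in nhdsWithin t (Set.Ico 0 t), |x s| ≤ M := by
      rcases eq_or_lt_of_le ht.1 with h0 | h0
      · refine ⟨0, ?_⟩
        have : Set.Ico (0:ℝ) t = ∅ := by rw [← h0]; simp
        rw [this, nhdsWithin_empty]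
        exact Filter.eventually_bot
      · obtain ⟨L, hLim⟩ := hx.2 t ⟨h0, ht.2⟩
        exact eventually_abs_bdd_of_tendsto hLim
    obtain ⟨M₁, hM₁⟩ := hR
    obtain ⟨M₂, hM₂⟩ := hL
    set M := max (max M₁ M₂) (|x t|) with hM
    have hsub : Set.Icc (0:ℝ) 1 ⊆ Set.Ico 0 t ∪ ({t} ∪ Set.Ioc t 1) := by
      intro s hs
      rcases lt_trichotomy s t with h | h | h
      · exact Or.inl ⟨hs.1, h⟩
      · exact Or.inr (Or.inl h)
      · exact Or.inr (Or.inr ⟨h, hs.2⟩)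
    have hle : nhdsWithin t (Set.Icc 0 1) ≤
        nhdsWithin t (Set.Ico 0 t) ⊔ (nhdsWithin t {t} ⊔ nhdsWithin t (Set.Ioc t 1)) := by
      rw [← nhdsWithin_union, ← nhdsWithin_union]
      exact nhdsWithin_mono t hsub
    have hev : ∀ᶠ s in nhdsWithin t (Set.Icc 0 1), |x s| ≤ M := by
      apply Filter.Eventually.filter_mono hle
      rw [Filter.eventually_sup, Filter.eventually_sup]
      refine ⟨hM₂.mono fun s hs => le_trans hs (le_max_of_le_left (le_max_right _ _)), ?_,
        hM₁.mono fun s hs => le_trans hs (le_max_of_le_left (le_max_left _ _))⟩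
      rw [nhdsWithin_singleton, Filter.eventually_pure]
      exact le_max_right _ _
    refine ⟨{s | |x s| ≤ M}, hev, ⟨M, ?_⟩⟩
    rintro y ⟨s, hs, rfl⟩
    exact hs
  obtain ⟨M, hM⟩ := key
  exact ⟨M, fun t ht => hM ⟨t, ht, rfl⟩⟩

private lemma abs_le_unifNorm {f : ℝ → ℝ}
    (hb : BddAbove ((fun t => |f t|) '' Set.Icc (0:ℝ) 1)) {t : ℝ}
    (ht : t ∈ Set.Icc (0:ℝ) 1) : |f t| ≤ unifNorm f :=
  le_csSup hb ⟨t, ht, rfl⟩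

/-- Continuity of the projection operator `Π` at `(x, ν)` when `x ∈ D[0,1]` is
continuous at each coordinate `ν_i`: if `x_n → x` in the Skorohod topology and
`ν^{(n)} → ν` componentwise in `[0,1]^m`, then
`(x_n(ν^{(n)}_1), …, x_n(ν^{(n)}_m)) → (x(ν_1), …, x(ν_m))` in `ℝ^m`. -/
theorem proj_continuousAt (m : ℕ) (x : ℝ → ℝ) (hx : RCLL x)
    (ν : Fin m → ℝ) (hν : ∀ i, ν i ∈ Set.Icc (0:ℝ) 1)
    (hcont : ∀ i, ContinuousWithinAt x (Set.Icc 0 1) (ν i))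
    (xn : ℕ → ℝ → ℝ) (hxn : ∀ n, RCLL (xn n))
    (hconv : SkorohodTendsto xn x)
    (νn : ℕ → Fin m → ℝ) (hνn : ∀ n i, νn n i ∈ Set.Icc (0:ℝ) 1)
    (hνconv : ∀ i, Filter.Tendsto (fun n => νn n i) Filter.atTop (nhds (ν i))) :
    Filter.Tendsto (fun n => proj m (xn n) (νn n)) Filter.atTop
      (nhds (proj m x ν)) := by
  obtain ⟨l, hl, hlconv, hxconv⟩ := hconv
  obtain ⟨Mx, hMx⟩ := rcll_bdd hx
  rw [tendsto_pi_nhds]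
  intro i
  have hmem : ∀ n, l n (νn n i) ∈ Set.Icc (0:ℝ) 1 :=
    fun n => (hl n).2.2.1.mapsTo (hνn n i)
  -- l n (νn n i) → ν i
  have hbl : ∀ n, BddAbove ((fun t => |l n t - t|) '' Set.Icc (0:ℝ) 1) := by
    intro n
    have hc : ContinuousOn (fun t => |l n t - t|) (Set.Icc (0:ℝ) 1) :=
      ((hl n).1.sub continuousOn_id).abs
    exact (isCompact_Icc.image_of_continuousOn hc).bddAbove
  have hdiff : Filter.Tendsto (fun n => l n (νn n i) - νn n i) Filter.atTop (nhds 0) := by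
    refine (tendsto_zero_iff_abs_tendsto_zero _).mpr (squeeze_zero (fun n => abs_nonneg _)
      (fun n => abs_le_unifNorm (hbl n) (hνn n i)) hlconv)
  have ha : Filter.Tendsto (fun n => l n (νn n i)) Filter.atTop (nhds (ν i)) := by
    have := hdiff.add (hνconv i)
    simpa using this
  -- x (l n (νn n i)) → x (ν i)
  have hxa : Filter.Tendsto (fun n => x (l n (νn n i))) Filter.atTop (nhds (x (ν i))) := by
    have h1 : Filter.Tendsto (fun n => l n (νn n i)) Filter.atTop
        (nhdsWithin (ν i) (Set.Icc 0 1)) :=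
      tendsto_nhdsWithin_of_tendsto_nhds_of_eventually_within _ ha
        (Filter.Eventually.of_forall hmem)
    exact (hcont i).tendsto.comp h1
  -- xn n (νn n i) - x (l n (νn n i)) → 0
  have hbxn : ∀ n, BddAbove ((fun t => |xn n t - x (l n t)|) '' Set.Icc (0:ℝ) 1) := by
    intro n
    obtain ⟨Mn, hMn⟩ := rcll_bdd (hxn n)
    refine ⟨Mn + Mx, ?_⟩
    rintro y ⟨t, ht, rfl⟩
    exact le_trans (abs_sub _ _) (add_le_add (hMn t ht) (hMx _ ((hl n).2.2.1.mapsTo ht)))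
  have hd2 : Filter.Tendsto (fun n => xn n (νn n i) - x (l n (νn n i)))
      Filter.atTop (nhds 0) := by
    refine (tendsto_zero_iff_abs_tendsto_zero _).mpr (squeeze_zero (fun n => abs_nonneg _)
      (fun n => abs_le_unifNorm (hbxn n) (hνn n i)) hxconv)
  have : Filter.Tendsto (fun n => (xn n (νn n i) - x (l n (νn n i))) + x (l n (νn n i)))
      Filter.atTop (nhds (0 + x (ν i))) := hd2.add hxa
  simpa [proj] using this
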